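/- Let v, k, λ be positive integers with 3 ≤ k < v and let r = ⌈λ(v−1)/(k−1)⌉. Suppose that every (v,k,λ)-covering D has at least α·|V₀(D)| + β·|V₁(D)| blocks, where α, β are nonnegative reals with α ≥ 2β, V₀(D) is the set of points lying in exactly r blocks and V₁(D) the set of points lying in exactly r+1 blocks. Then every (v,k,λ)-covering has at least (rv(α−β) + αv)/(k(α−β) + 1) blocks. -/
import Mathlib

lemma aux_sum {v k : ℕ} (𝓑 : Multiset (Finset (Fin v))) (h : ∀ b ∈ 𝓑, b.card = k) :
    ∑ u : Fin v, 𝓑.countP (fun b => u ∈ b) = Multiset.card 𝓑 * k := by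
  induction 𝓑 using Multiset.induction_on with
  | empty => simp
  | cons a s ih =>
    have ha : a.card = k := h a (Multiset.mem_cons_self a s)
    have hs : ∀ b ∈ s, b.card = k := fun b hb => h b (Multiset.mem_cons_of_mem hb)
    simp only [Multiset.countP_cons, Finset.sum_add_distrib, ih hs, Multiset.card_cons]
    have : ∑ u : Fin v, (if u ∈ a then 1 else 0) = a.card := by
      simp [Finset.sum_ite_mem]
    rw [this, ha]
    ring

lemma aux_pair {v k : ℕ} (u : Fin v) (𝓑 : Multiset (Finset (Fin v)))
    (h : ∀ b ∈ 𝓑, b.card = k) :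
    ∑ w ∈ Finset.univ.erase u, 𝓑.countP (fun b => u ∈ b ∧ w ∈ b)
      ≤ 𝓑.countP (fun b => u ∈ b) * (k - 1) := by
  induction 𝓑 using Multiset.induction_on with
  | empty => simp
  | cons a s ih =>
    have ha : a.card = k := h a (Multiset.mem_cons_self a s)
    have hs : ∀ b ∈ s, b.card = k := fun b hb => h b (Multiset.mem_cons_of_mem hb)
    simp only [Multiset.countP_cons, Finset.sum_add_distrib, add_mul]
    have key : ∑ w ∈ Finset.univ.erase u, (if u ∈ a ∧ w ∈ a then 1 else 0)
        ≤ (if u ∈ a then 1 else 0) * (k - 1) := by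
      by_cases hu : u ∈ a
      · simp only [hu, true_and, if_true, one_mul]
        have hfe : Finset.filter (fun x => x ∈ a) (Finset.univ.erase u) = a.erase u := by
          ext x; simp [Finset.mem_erase, and_comm]
        have h1 : ∑ w ∈ Finset.univ.erase u, (if w ∈ a then 1 else 0)
            = (a.erase u).card := by
          rw [Finset.sum_boole, hfe]; simp
        rw [h1, Finset.card_erase_of_mem hu, ha]
      · simp [hu]
    exact add_le_add (ih hs) key

theorem stmt_19 (v k l : ℕ) (hl : 0 < l) (hk : 3 ≤ k) (hkv : k < v)
    (r : ℕ) (hr : (r : ℤ) = ⌈(l * (v - 1) : ℚ) / (k - 1)⌉)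
    (α β : ℝ) (hα : 0 ≤ α) (hβ : 0 ≤ β) (hαβ : 2 * β ≤ α)
    (hyp : ∀ 𝓑 : Multiset (Finset (Fin v)),
      (∀ b ∈ 𝓑, b.card = k) →
      (∀ u w : Fin v, u ≠ w → l ≤ 𝓑.countP (fun b => u ∈ b ∧ w ∈ b)) →
      α * ((Finset.univ.filter
              (fun u : Fin v => 𝓑.countP (fun b => u ∈ b) = r)).card : ℝ)
        + β * ((Finset.univ.filter
              (fun u : Fin v => 𝓑.countP (fun b => u ∈ b) = r + 1)).card : ℝ)
        ≤ (Multiset.card 𝓑 : ℝ)) :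
    ∀ 𝓑 : Multiset (Finset (Fin v)),
      (∀ b ∈ 𝓑, b.card = k) →
      (∀ u w : Fin v, u ≠ w → l ≤ 𝓑.countP (fun b => u ∈ b ∧ w ∈ b)) →
      (r * v * (α - β) + α * v) / (k * (α - β) + 1) ≤ (Multiset.card 𝓑 : ℝ) := by
  intro 𝓑 hcard hcov
  set n : Fin v → ℕ := fun u => 𝓑.countP (fun b => u ∈ b) with hn
  -- replication number lower bound
  have hnr : ∀ u : Fin v, r ≤ n u := by
    intro u
    have hlow : l * (v - 1) ≤ ∑ w ∈ Finset.univ.erase u, 𝓑.countP (fun b => u ∈ b ∧ w ∈ b) := by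
      calc l * (v - 1) = (Finset.univ.erase u).card * l := by
            rw [Finset.card_erase_of_mem (Finset.mem_univ u), Finset.card_univ, Fintype.card_fin,
              Nat.mul_comm]
        _ ≤ _ := Finset.card_nsmul_le_sum _ _ _ (fun w hw => by
            exact hcov u w (fun h => (Finset.mem_erase.mp hw).1 h.symm))
    have hub := aux_pair u 𝓑 hcard
    have hkey : l * (v - 1) ≤ n u * (k - 1) := le_trans hlow hub
    -- move to ℚ
    have hv1 : 1 ≤ v := by omega
    have hk1 : 1 ≤ k := by omega
    have hq : (l : ℚ) * ((v : ℚ) - 1) ≤ (n u : ℚ) * ((k : ℚ) - 1) := by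
      have := (Nat.cast_le (α := ℚ)).mpr hkey
      push_cast [Nat.cast_sub hv1, Nat.cast_sub hk1] at this
      convert this using 2 <;> push_cast <;> ring
    have hkpos : (0 : ℚ) < (k : ℚ) - 1 := by
      have : (3 : ℚ) ≤ (k : ℚ) := by exact_mod_cast hk
      linarith
    have : (r : ℤ) ≤ (n u : ℤ) := by
      rw [hr]
      rw [Int.ceil_le]
      rw [div_le_iff₀ hkpos]
      push_cast
      exact hq
    exact_mod_cast this
  -- excess function
  set e : Fin v → ℕ := fun u => n u - r with he
  have hsum : ∑ u : Fin v, n u = Multiset.card 𝓑 * k := aux_sum 𝓑 hcard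
  have hA : (∑ u : Fin v, e u) + r * v = Multiset.card 𝓑 * k := by
    have : ∑ u : Fin v, (e u + r) = ∑ u : Fin v, n u := by
      apply Finset.sum_congr rfl
      intro u _
      exact Nat.sub_add_cancel (hnr u)
    rw [Finset.sum_add_distrib, Finset.sum_const, Finset.card_univ, Fintype.card_fin,
      smul_eq_mul] at this
    rw [mul_comm v r] at this
    omega
  set A : ℕ := ∑ u : Fin v, e u with hAdef
  set c0 : ℕ := (Finset.univ.filter (fun u : Fin v => 𝓑.countP (fun b => u ∈ b) = r)).card with hc0
  set c1 : ℕ := (Finset.univ.filter (fun u : Fin v => 𝓑.countP (fun b => u ∈ b) = r + 1)).card with hc1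
  -- inequality 1 : 2*v ≤ A + 2*c0 + c1
  have hineq1 : 2 * v ≤ A + 2 * c0 + c1 := by
    have hpt : ∀ u : Fin v, 2 ≤ e u + ((if n u = r then 2 else 0) + (if n u = r + 1 then 1 else 0)) := by
      intro u
      have h1 := hnr u
      by_cases h0 : n u = r
      · simp [he, h0]
      · by_cases h2 : n u = r + 1
        · simp [he, h2, h0]
        · have : r + 2 ≤ n u := by omega
          have : 2 ≤ e u := by simp [he]; omega
          omega
    have := Finset.sum_le_sum (fun u (_ : u ∈ Finset.univ) => hpt u)
    rw [Finset.sum_const, Finset.card_univ, Fintype.card_fin, smul_eq_mul,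
      Finset.sum_add_distrib, Finset.sum_add_distrib] at this
    have e2 : ∑ u : Fin v, (if n u = r then 2 else 0) = 2 * c0 := by
      rw [Finset.sum_ite, Finset.sum_const, Finset.sum_const, smul_eq_mul, smul_eq_mul, hc0]
      simp [hn]
      ring
    have e3 : ∑ u : Fin v, (if n u = r + 1 then 1 else 0) = c1 := by
      rw [Finset.sum_ite, Finset.sum_const, Finset.sum_const, smul_eq_mul, smul_eq_mul, hc1]
      simp [hn]
    rw [e2, e3] at this
    omega
  -- inequality 2 : c1 ≤ A
  have hineq2 : c1 ≤ A := by
    have hpt : ∀ u : Fin v, (if n u = r + 1 then 1 else 0) ≤ e u := by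
      intro u
      have h1 := hnr u
      by_cases h2 : n u = r + 1
      · simp [he, h2]
      · simp [h2]
    have := Finset.sum_le_sum (fun u (_ : u ∈ Finset.univ) => hpt u)
    have e3 : ∑ u : Fin v, (if n u = r + 1 then 1 else 0) = c1 := by
      rw [Finset.sum_ite, Finset.sum_const, Finset.sum_const, smul_eq_mul, smul_eq_mul, hc1]
      simp [hn]
    rw [e3] at this
    exact this
  -- from hypothesis
  have hb := hyp 𝓑 hcard hcov
  rw [← hc0, ← hc1] at hb
  -- real casts
  set B : ℝ := (Multiset.card 𝓑 : ℝ) with hB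
  have h1R : (2 : ℝ) * v ≤ (A : ℝ) + 2 * c0 + c1 := by exact_mod_cast hineq1
  have h2R : (c1 : ℝ) ≤ (A : ℝ) := by exact_mod_cast hineq2
  have h3R : (A : ℝ) + r * v = B * k := by
    rw [hB]
    exact_mod_cast hA
  have hden : (0 : ℝ) < (k : ℝ) * (α - β) + 1 := by
    have hk0 : (0 : ℝ) ≤ (k : ℝ) := Nat.cast_nonneg k
    nlinarith
  rw [div_le_iff₀ hden]
  nlinarith [mul_nonneg hα (by linarith : (0 : ℝ) ≤ (A : ℝ) + 2 * c0 + c1 - 2 * v),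
    mul_nonneg (by linarith : (0 : ℝ) ≤ α - 2 * β) (by linarith : (0 : ℝ) ≤ (A : ℝ) - c1)]
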